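/- Let n ≥ 3 and let D be a nonempty subset of {0,1,…,n−2}. The Θ-oriented cycle C⃗_n is D-antimagic if and only if min(D) ≤ 1. -/
import Mathlib


open scoped Classical

/-- There is a directed walk of length `k` from `u` to `v` in the digraph with arc relation `A`. -/
def WalkLen {V : Type*} (A : V → V → Prop) : ℕ → V → V → Prop
  | 0, u, v => u = v
  | k + 1, u, v => ∃ w, A u w ∧ WalkLen A k w v

/-- The directed distance from `u` to `v` is exactly `k`
(i.e. `k` is the length of a shortest directed path from `u` to `v`). -/
def HasDist {V : Type*} (A : V → V → Prop) (u v : V) (k : ℕ) : Prop :=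
  WalkLen A k u v ∧ ∀ m < k, ¬ WalkLen A m u v

/-- `y` belongs to the `D`-neighborhood of `v`: the distance from `v` to `y` lies in `D`. -/
def InDNbhd {V : Type*} (A : V → V → Prop) (D : Set ℕ) (v y : V) : Prop :=
  ∃ k ∈ D, HasDist A v y k

/-- The `D`-weight of `v` under the labeling `f`: the sum of labels of the `D`-neighbors. -/
noncomputable def dWeight {V : Type*} [Fintype V] (A : V → V → Prop) (D : Set ℕ)
    (f : V → ℕ) (v : V) : ℕ :=
  ∑ y : V, if InDNbhd A D v y then f y else 0

/-- The digraph `(V, A)` is `D`-antimagic: some bijective labeling of the vertices by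
`1, …, |V|` gives pairwise distinct `D`-weights. -/
def DAntimagic (V : Type*) [Fintype V] (A : V → V → Prop) (D : Set ℕ) : Prop :=
  ∃ f : V ≃ Fin (Fintype.card V),
    Function.Injective fun v => dWeight A D (fun y => (f y : ℕ) + 1) v

/-- The orientation of the cycle `C_n` determined by `σ`: the edge between vertex `i` and
vertex `(i+1) mod n` is directed `i → i+1` when `σ i = true`, and `i+1 → i` otherwise. -/
def cycleArc (n : ℕ) (σ : Fin n → Bool) (u v : Fin n) : Prop :=
  (σ u = true ∧ (v : ℕ) = ((u : ℕ) + 1) % n) ∨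
  (σ v = false ∧ (u : ℕ) = ((v : ℕ) + 1) % n)

/-- The arc relation of the unidirectional oriented cycle `C⃗_n`: arcs `i → (i+1) mod n`. -/
def uniArc (n : ℕ) (u v : Fin n) : Prop :=
  (v : ℕ) = ((u : ℕ) + 1) % n

/-- An orientation of `C_n` is unidirectional if all edges are directed the same way around. -/
def Unidirectional (n : ℕ) (σ : Fin n → Bool) : Prop :=
  (∀ i, σ i = true) ∨ (∀ i, σ i = false)

/-- A sink: a vertex of out-degree 0. -/
def IsSink {V : Type*} (A : V → V → Prop) (u : V) : Prop :=
  ∀ v, ¬ A u v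

/-- A source: a vertex of in-degree 0. -/
def IsSource {V : Type*} (A : V → V → Prop) (u : V) : Prop :=
  ∀ v, ¬ A v u

/-- A digraph is Θ-oriented if it has exactly one sink and exactly one source, and
they are adjacent (so the arc between them goes from the source to the sink). -/
def ThetaOriented {V : Type*} (A : V → V → Prop) : Prop :=
  ∃ s t, IsSink A s ∧ IsSource A t ∧ (∀ u, IsSink A u → u = s) ∧
    (∀ u, IsSource A u → u = t) ∧ A t s

/-- The arc relation of the Θ-oriented cycle on `Fin n`:
arcs `i → i+1` for `0 ≤ i ≤ n-2`, together with the arc `0 → n-1`. -/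
def thetaArc (n : ℕ) (u v : Fin n) : Prop :=
  ((v : ℕ) = (u : ℕ) + 1) ∨ ((u : ℕ) = 0 ∧ (v : ℕ) = n - 1)

/-- The arc relation of a disjoint union of `c` oriented cycles, the `j`-th component having
`len j` vertices and arc relation `A j`. -/
def unionArc (c : ℕ) (len : Fin c → ℕ)
    (A : ∀ j, Fin (len j) → Fin (len j) → Prop)
    (u v : Σ j, Fin (len j)) : Prop :=
  ∃ h : u.1 = v.1, A v.1 (Fin.cast (congrArg len h) u.2) v.2


section ThetaAux

/-- Characterization of walks in the Θ-oriented cycle. -/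
lemma theta_walk_iff {n : ℕ} (hn : 3 ≤ n) :
    ∀ (k : ℕ) (u v : Fin n), WalkLen (thetaArc n) k u v ↔
      ((v : ℕ) = (u : ℕ) + k ∨ (k = 1 ∧ (u : ℕ) = 0 ∧ (v : ℕ) = n - 1)) := by
  intro k
  induction k with
  | zero =>
      intro u v
      simp only [WalkLen]
      constructor
      · rintro rfl; left; omega
      · rintro (h | ⟨h, _⟩)
        · exact Fin.ext (by omega)
        · omega
  | succ k ih =>
      intro u v
      simp only [WalkLen]
      constructor
      · rintro ⟨w, harc, hwalk⟩
        rcases harc with h1 | ⟨h0, hw⟩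
        · rcases (ih w v).1 hwalk with h | ⟨hk, hw0, hv⟩
          · left; omega
          · exfalso; omega
        · rcases (ih w v).1 hwalk with h | ⟨hk, hw0, hv⟩
          · have hv := v.isLt
            right; refine ⟨by omega, h0, by omega⟩
          · exfalso; omega
      · rintro (h | ⟨hk, h0, hv⟩)
        · have hvlt := v.isLt
          have hult : (u : ℕ) + 1 < n := by omega
          refine ⟨⟨(u : ℕ) + 1, hult⟩, Or.inl rfl, ?_⟩
          exact (ih _ v).2 (Or.inl (by simp; omega))
        · refine ⟨v, Or.inr ⟨h0, by omega⟩, ?_⟩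
          exact (ih v v).2 (Or.inl (by omega))

/-- Characterization of directed distances in the Θ-oriented cycle. -/
lemma theta_hasDist_iff {n : ℕ} (hn : 3 ≤ n) (u v : Fin n) (k : ℕ) :
    HasDist (thetaArc n) u v k ↔
      (((u : ℕ) = 0 ∧ (v : ℕ) = n - 1) ∧ k = 1) ∨
      (¬((u : ℕ) = 0 ∧ (v : ℕ) = n - 1) ∧ (v : ℕ) = (u : ℕ) + k) := by
  constructor
  · rintro ⟨hw, hmin⟩
    rcases (theta_walk_iff hn k u v).1 hw with h | ⟨hk, h0, hv⟩
    · by_cases hsp : (u : ℕ) = 0 ∧ (v : ℕ) = n - 1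
      · exfalso
        obtain ⟨hu0, hv1⟩ := hsp
        have h1 : WalkLen (thetaArc n) 1 u v :=
          (theta_walk_iff hn 1 u v).2 (Or.inr ⟨rfl, hu0, hv1⟩)
        exact hmin 1 (by omega) h1
      · exact Or.inr ⟨hsp, h⟩
    · exact Or.inl ⟨⟨h0, hv⟩, hk⟩
  · rintro (⟨⟨h0, hv⟩, hk⟩ | ⟨hsp, hv⟩)
    · subst hk
      refine ⟨(theta_walk_iff hn 1 u v).2 (Or.inr ⟨rfl, h0, hv⟩), ?_⟩
      intro m hm hwm
      interval_cases m
      rcases (theta_walk_iff hn 0 u v).1 hwm with h | h <;> omega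
    · refine ⟨(theta_walk_iff hn k u v).2 (Or.inl hv), ?_⟩
      intro m hm hwm
      rcases (theta_walk_iff hn m u v).1 hwm with h | ⟨hm1, h0, hv'⟩
      · omega
      · exact hsp ⟨h0, hv'⟩

/-- Characterization of `D`-neighborhoods in the Θ-oriented cycle. -/
lemma theta_inD_iff {n : ℕ} (hn : 3 ≤ n) (D : Set ℕ) (u y : Fin n) :
    InDNbhd (thetaArc n) D u y ↔
      (((u : ℕ) = 0 ∧ (y : ℕ) = n - 1) ∧ 1 ∈ D) ∨
      (¬((u : ℕ) = 0 ∧ (y : ℕ) = n - 1) ∧ (u : ℕ) ≤ (y : ℕ) ∧ (y : ℕ) - (u : ℕ) ∈ D) := by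
  constructor
  · rintro ⟨k, hk, hd⟩
    rcases (theta_hasDist_iff hn u y k).1 hd with ⟨hsp, rfl⟩ | ⟨hsp, hv⟩
    · exact Or.inl ⟨hsp, hk⟩
    · refine Or.inr ⟨hsp, by omega, ?_⟩
      have h : (y : ℕ) - (u : ℕ) = k := by omega
      rw [h]; exact hk
  · rintro (⟨hsp, h1⟩ | ⟨hsp, hle, hmem⟩)
    · exact ⟨1, h1, (theta_hasDist_iff hn u y 1).2 (Or.inl ⟨hsp, rfl⟩)⟩
    · exact ⟨(y : ℕ) - (u : ℕ), hmem,
        (theta_hasDist_iff hn u y _).2 (Or.inr ⟨hsp, by omega⟩)⟩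

lemma theta_dWeight_eq {n : ℕ} (D : Set ℕ) (g : Fin n → ℕ) (v : Fin n) :
    dWeight (thetaArc n) D g v
      = ∑ y ∈ Finset.univ.filter (fun y => InDNbhd (thetaArc n) D v y), g y := by
  rw [Finset.sum_filter]; rfl

/-- The weight strictly decreases along the chain. -/
lemma theta_step {n : ℕ} (hn : 3 ≤ n) (D : Set ℕ) (hD : D.Nonempty)
    (hsub : D ⊆ {m : ℕ | m ≤ n - 2}) (hinf : sInf D ≤ 1)
    (i : ℕ) (h : i + 1 < n) :
    dWeight (thetaArc n) D (fun y => n - (y : ℕ)) ⟨i + 1, h⟩ <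
    dWeight (thetaArc n) D (fun y => n - (y : ℕ)) ⟨i, by omega⟩ := by
  classical
  set g : Fin n → ℕ := fun y => n - (y : ℕ) with hg
  set v : Fin n := ⟨i, by omega⟩ with hv
  set w : Fin n := ⟨i + 1, h⟩ with hw
  set Nv := Finset.univ.filter (fun y => InDNbhd (thetaArc n) D v y) with hNv
  set Nw := Finset.univ.filter (fun y => InDNbhd (thetaArc n) D w y) with hNw
  have hmemw : ∀ y : Fin n, y ∈ Nw ↔ (i + 1 ≤ (y : ℕ) ∧ (y : ℕ) - (i + 1) ∈ D) := by
    intro y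
    rw [hNw, Finset.mem_filter]
    simp only [Finset.mem_univ, true_and]
    rw [theta_inD_iff hn]
    constructor
    · rintro (⟨⟨h0, _⟩, _⟩ | ⟨_, hle, hmem⟩)
      · simp [hw] at h0
      · exact ⟨by simpa [hw] using hle, by simpa [hw] using hmem⟩
    · rintro ⟨hle, hmem⟩
      exact Or.inr ⟨by simp [hw], by simpa [hw] using hle, by simpa [hw] using hmem⟩
  -- the shift map
  set ι : Fin n → Fin n := fun y => ⟨(y : ℕ) - 1, by have := y.isLt; omega⟩ with hι
  have claim1 : ∀ y ∈ Nw, ι y ∈ Nv := by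
    intro y hy
    rw [hmemw] at hy
    obtain ⟨hle, hmem⟩ := hy
    rw [hNv, Finset.mem_filter]
    refine ⟨Finset.mem_univ _, ?_⟩
    rw [theta_inD_iff hn]
    have hsubk := hsub hmem
    simp only [Set.mem_setOf_eq] at hsubk
    have hylt := y.isLt
    refine Or.inr ⟨?_, ?_, ?_⟩
    · rintro ⟨h0, h1⟩
      simp [hv, hι] at h0 h1
      omega
    · simp [hv, hι]; omega
    · have : ((ι y : Fin n) : ℕ) - (v : ℕ) = (y : ℕ) - (i + 1) := by
        simp [hv, hι]; omega
      rw [this]; exact hmem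
  have claim2 : ∀ y ∈ Nw, ∀ z ∈ Nw, ι y = ι z → y = z := by
    intro y hy z hz hyz
    rw [hmemw] at hy hz
    have := congrArg (fun t : Fin n => (t : ℕ)) hyz
    simp only [hι] at this
    exact Fin.ext (by omega)
  have claim3 : ∀ y ∈ Nw, g (ι y) = g y + 1 := by
    intro y hy
    rw [hmemw] at hy
    have hylt := y.isLt
    simp only [hg, hι]
    omega
  have hineq : dWeight (thetaArc n) D g w + Nw.card ≤ dWeight (thetaArc n) D g v := by
    rw [theta_dWeight_eq, theta_dWeight_eq, ← hNv, ← hNw]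
    calc (∑ y ∈ Nw, g y) + Nw.card = ∑ y ∈ Nw, (g y + 1) := by
              rw [Finset.sum_add_distrib]; simp
      _ = ∑ y ∈ Nw, g (ι y) := by
              apply Finset.sum_congr rfl
              intro y hy; rw [claim3 y hy]
      _ = ∑ y ∈ Nw.image ι, g y := (Finset.sum_image claim2).symm
      _ ≤ ∑ y ∈ Nv, g y := by
              apply Finset.sum_le_sum_of_subset
              intro y hy
              rw [Finset.mem_image] at hy
              obtain ⟨z, hz, rfl⟩ := hy
              exact claim1 z hz
  rcases Nw.eq_empty_or_nonempty with hemp | hne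
  · -- weight of w is 0; weight of v is positive
    have hw0 : dWeight (thetaArc n) D g w = 0 := by
      rw [theta_dWeight_eq, ← hNw, hemp, Finset.sum_empty]
    rw [hw0]
    have hd : sInf D ∈ D := Nat.sInf_mem hD
    have hdle : sInf D ≤ 1 := hinf
    set d := sInf D with hdd
    set y0 : Fin n := ⟨i + d, by omega⟩ with hy0
    have hy0mem : y0 ∈ Nv := by
      rw [hNv, Finset.mem_filter]
      refine ⟨Finset.mem_univ _, ?_⟩
      rw [theta_inD_iff hn]
      refine Or.inr ⟨?_, ?_, ?_⟩
      · rintro ⟨h0, h1⟩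
        simp [hv, hy0] at h0 h1
        omega
      · simp [hv, hy0]
      · have : ((y0 : Fin n) : ℕ) - (v : ℕ) = d := by simp [hv, hy0]
        rw [this]; exact hd
    have hpos : 0 < g y0 := by
      simp only [hg, hy0]
      omega
    calc 0 < g y0 := hpos
      _ ≤ ∑ y ∈ Nv, g y := Finset.single_le_sum (fun a _ => Nat.zero_le _) hy0mem
      _ = dWeight (thetaArc n) D g v := (theta_dWeight_eq D g v).symm
  · have hcard : 0 < Nw.card := Finset.card_pos.2 hne
    omega

end ThetaAux

/-- For `n ≥ 3` and a nonempty `D ⊆ {0, …, n-2}`, the Θ-oriented cycle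
`C⃗_n` is `D`-antimagic iff `min D ≤ 1`. -/
theorem theta_antimagic_iff_min_le_one (n : ℕ) (hn : 3 ≤ n) (D : Set ℕ)
    (hD : D.Nonempty) (hsub : D ⊆ {m : ℕ | m ≤ n - 2}) :
    DAntimagic (Fin n) (thetaArc n) D ↔ sInf D ≤ 1 := by
  constructor
  · -- antimagic → min D ≤ 1
    rintro ⟨f, hf⟩
    by_contra hlt
    push_neg at hlt
    have h0 : 0 ∉ D := fun hmem => by have := Nat.sInf_le hmem; omega
    have h1 : 1 ∉ D := fun hmem => by have := Nat.sInf_le hmem; omega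
    have hz : ∀ (v : Fin n), n - 2 ≤ (v : ℕ) →
        dWeight (thetaArc n) D (fun y => (f y : ℕ) + 1) v = 0 := by
      intro v hv
      apply Finset.sum_eq_zero
      intro y _
      rw [if_neg]
      intro hin
      rcases (theta_inD_iff hn D v y).1 hin with ⟨⟨h0', _⟩, _⟩ | ⟨_, hle, hmem'⟩
      · omega
      · have hy := y.isLt
        have : (y : ℕ) - (v : ℕ) = 0 ∨ (y : ℕ) - (v : ℕ) = 1 := by omega
        rcases this with h | h <;> rw [h] at hmem'
        · exact h0 hmem'
        · exact h1 hmem'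
    have e1 := hz ⟨n - 1, by omega⟩ (by simp; omega)
    have e2 := hz ⟨n - 2, by omega⟩ (by simp)
    have : (⟨n - 2, by omega⟩ : Fin n) = ⟨n - 1, by omega⟩ := hf (e2.trans e1.symm)
    have := congrArg (fun t : Fin n => (t : ℕ)) this
    simp at this
    omega
  · -- min D ≤ 1 → antimagic
    intro hinf
    refine ⟨Fin.revPerm.trans (finCongr (Fintype.card_fin n).symm), ?_⟩
    have hfun : (fun y : Fin n =>
        ((Fin.revPerm.trans (finCongr (Fintype.card_fin n).symm) y : Fin (Fintype.card (Fin n))) : ℕ) + 1)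
        = (fun y : Fin n => n - (y : ℕ)) := by
      funext y
      have hy := y.isLt
      simp [Fin.val_rev]
      omega
    rw [hfun]
    set W : Fin n → ℕ := dWeight (thetaArc n) D (fun y => n - (y : ℕ)) with hW
    have step : ∀ (i : ℕ) (h : i + 1 < n), W ⟨i + 1, h⟩ < W ⟨i, by omega⟩ :=
      fun i h => theta_step hn D hD hsub hinf i h
    have main : ∀ (m i : ℕ) (hi : i < n) (hj : i + m + 1 < n),
        W ⟨i + m + 1, hj⟩ < W ⟨i, hi⟩ := by
      intro m
      induction m with
      | zero => intro i hi hj; exact step i hj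
      | succ m ih =>
          intro i hi hj
          exact lt_trans (step (i + m + 1) hj) (ih i hi (by omega))
    have main' : ∀ i j : Fin n, (i : ℕ) < (j : ℕ) → W j < W i := by
      intro i j hij
      have h := main ((j : ℕ) - (i : ℕ) - 1) (i : ℕ) i.isLt (by have := j.isLt; omega)
      have hj : (⟨(i : ℕ) + ((j : ℕ) - (i : ℕ) - 1) + 1, by have := j.isLt; omega⟩ : Fin n) = j :=
        Fin.ext (by simp; omega)
      have hi : (⟨(i : ℕ), i.isLt⟩ : Fin n) = i := Fin.ext rfl
      rwa [hj, hi] at h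
    intro a b hab
    rcases lt_trichotomy (a : ℕ) (b : ℕ) with hlt | heq | hgt
    · exact absurd (hab : W a = W b) (ne_of_gt (main' a b hlt))
    · exact Fin.ext heq
    · exact absurd (hab : W a = W b) (ne_of_lt (main' b a hgt))
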